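/- Oracle inequality for the ℓ_{1-2} regularization: Let b = A x̄ with x̄ supported on S, |S| = s, and suppose A satisfies the ℓ_{1-2}-REC(s,s), i.e. φ(s,s) > 0. If x* satisfies ‖Ax* − b‖_2^2/2 + λ(‖x*‖_1 − ‖x*‖_2) ≤ λ(‖x̄‖_1 − ‖x̄‖_2), then (1/2)‖Ax* − b‖_2^2 + λ(‖x*_{S^c}‖_1 − ‖x*_{S^c}‖_2) ≤ 2λ²(√s + 1)² / φ²(s,s). -/
import Mathlib

open Finset

noncomputable def l1 {k : ℕ} (x : Fin k → ℝ) : ℝ := ∑ i, |x i|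

noncomputable def l2 {k : ℕ} (x : Fin k → ℝ) : ℝ := Real.sqrt (∑ i, (x i)^2)

def restr {k : ℕ} (I : Finset (Fin k)) (x : Fin k → ℝ) : Fin k → ℝ :=
  fun i => if i ∈ I then x i else 0

lemma l2_nonneg {k : ℕ} (x : Fin k → ℝ) : 0 ≤ l2 x := Real.sqrt_nonneg _

lemma sum_sq_nonneg' {k : ℕ} (x : Fin k → ℝ) : 0 ≤ ∑ i, (x i)^2 :=
  Finset.sum_nonneg fun _ _ => sq_nonneg _

lemma l2_sq {k : ℕ} (x : Fin k → ℝ) : (l2 x)^2 = ∑ i, (x i)^2 :=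
  Real.sq_sqrt (sum_sq_nonneg' x)

lemma l1_nonneg {k : ℕ} (x : Fin k → ℝ) : 0 ≤ l1 x :=
  Finset.sum_nonneg fun _ _ => abs_nonneg _

lemma l2_le_l1 {k : ℕ} (x : Fin k → ℝ) : l2 x ≤ l1 x := by
  have h1 : ∑ i, (x i)^2 ≤ (∑ i, |x i|)^2 := by
    have := Finset.sum_sq_le_sq_sum_of_nonneg (s := Finset.univ)
      (f := fun i => |x i|) (fun i _ => abs_nonneg _)
    simpa [sq_abs] using this
  calc l2 x ≤ Real.sqrt ((∑ i, |x i|)^2) := Real.sqrt_le_sqrt h1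
    _ = l1 x := Real.sqrt_sq (l1_nonneg x)

lemma l1_sub_le {k : ℕ} (a b : Fin k → ℝ) : l1 (a - b) ≤ l1 a + l1 b := by
  rw [l1, l1, l1, ← Finset.sum_add_distrib]
  exact Finset.sum_le_sum fun i _ => abs_sub (a i) (b i)

lemma l2_eq_norm {k : ℕ} (x : Fin k → ℝ) :
    l2 x = ‖(WithLp.equiv 2 (Fin k → ℝ)).symm x‖ := by
  rw [EuclideanSpace.norm_eq]
  simp [l2, Real.norm_eq_abs, sq_abs]

lemma l2_sub_le {k : ℕ} (a b : Fin k → ℝ) : l2 a ≤ l2 b + l2 (a - b) := by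
  rw [l2_eq_norm, l2_eq_norm, l2_eq_norm]
  have h : (WithLp.equiv 2 (Fin k → ℝ)).symm a =
      (WithLp.equiv 2 (Fin k → ℝ)).symm b + (WithLp.equiv 2 (Fin k → ℝ)).symm (a - b) := by
    ext i; simp
  rw [h]; exact norm_add_le _ _

lemma sum_restr {k : ℕ} (I : Finset (Fin k)) (x : Fin k → ℝ) (f : ℝ → ℝ) (hf : f 0 = 0) :
    ∑ i, f (restr I x i) = ∑ i ∈ I, f (x i) := by
  rw [← Finset.sum_subset (Finset.subset_univ I)
    (fun i _ hi => by simp [restr, hi, hf])]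
  exact Finset.sum_congr rfl fun i hi => by simp [restr, hi]

lemma l1_restr_eq {k : ℕ} (I : Finset (Fin k)) (x : Fin k → ℝ) :
    l1 (restr I x) = ∑ i ∈ I, |x i| := sum_restr I x (fun t => |t|) abs_zero

lemma l2_restr_sq {k : ℕ} (I : Finset (Fin k)) (x : Fin k → ℝ) :
    (l2 (restr I x))^2 = ∑ i ∈ I, (x i)^2 := by
  rw [l2_sq]; exact sum_restr I x (fun t => t^2) (by norm_num)

lemma l1_split {k : ℕ} (I : Finset (Fin k)) (x : Fin k → ℝ) :
    l1 x = l1 (restr I x) + l1 (restr Iᶜ x) := by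
  rw [l1_restr_eq, l1_restr_eq, Finset.sum_add_sum_compl]; rfl

lemma l2_sq_split {k : ℕ} (I : Finset (Fin k)) (x : Fin k → ℝ) :
    (l2 x)^2 = (l2 (restr I x))^2 + (l2 (restr Iᶜ x))^2 := by
  rw [l2_sq, l2_restr_sq, l2_restr_sq, Finset.sum_add_sum_compl]

lemma l2_split_le {k : ℕ} (I : Finset (Fin k)) (x : Fin k → ℝ) :
    l2 x ≤ l2 (restr I x) + l2 (restr Iᶜ x) := by
  have ha := l2_nonneg (restr I x)
  have hb := l2_nonneg (restr Iᶜ x)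
  have hx := l2_nonneg x
  have hsq := l2_sq_split I x
  nlinarith [mul_nonneg ha hb]

lemma l2_restr_mono {k : ℕ} {I J : Finset (Fin k)} (hIJ : I ⊆ J) (x : Fin k → ℝ) :
    l2 (restr I x) ≤ l2 (restr J x) := by
  apply Real.sqrt_le_sqrt
  apply Finset.sum_le_sum
  intro i _
  by_cases hi : i ∈ I
  · simp [restr, hi, hIJ hi]
  · simp [restr, hi]; positivity

lemma l1_le_sqrt_card_mul_l2 {k : ℕ} (I : Finset (Fin k)) (x : Fin k → ℝ) :
    l1 (restr I x) ≤ Real.sqrt I.card * l2 (restr I x) := by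
  have h1 : (l1 (restr I x))^2 ≤ (Real.sqrt I.card * l2 (restr I x))^2 := by
    rw [mul_pow, Real.sq_sqrt (Nat.cast_nonneg _), l2_restr_sq, l1_restr_eq]
    have := sq_sum_le_card_mul_sum_sq (s := I) (f := fun i => |x i|)
    simpa [sq_abs] using this
  have h2 : 0 ≤ Real.sqrt I.card * l2 (restr I x) :=
    mul_nonneg (Real.sqrt_nonneg _) (l2_nonneg _)
  nlinarith [l1_nonneg (restr I x)]

lemma exists_top {α : Type*} [DecidableEq α] (f : α → ℝ) (C : Finset α) :
    ∀ n, n ≤ C.card → ∃ T, T ⊆ C ∧ T.card = n ∧ ∀ i ∈ T, ∀ j ∈ C \ T, f j ≤ f i := by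
  intro n
  induction n with
  | zero => exact fun _ => ⟨∅, by simp⟩
  | succ n ih =>
    intro hn
    obtain ⟨T, hTC, hTcard, hTmax⟩ := ih (Nat.le_of_succ_le hn)
    have hne : (C \ T).Nonempty := by
      rw [← Finset.card_pos, Finset.card_sdiff_of_subset hTC]; omega
    obtain ⟨a, haCT, hamax⟩ := Finset.exists_max_image (C \ T) f hne
    have haC := (Finset.mem_sdiff.mp haCT).1
    have haT := (Finset.mem_sdiff.mp haCT).2
    refine ⟨insert a T, Finset.insert_subset haC hTC, ?_, ?_⟩
    · rw [Finset.card_insert_of_notMem haT, hTcard]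
    · intro i hi j hj
      have hj' : j ∈ C \ T := by
        rw [Finset.mem_sdiff] at hj ⊢
        exact ⟨hj.1, fun h => hj.2 (Finset.mem_insert_of_mem h)⟩
      rcases Finset.mem_insert.mp hi with rfl | hiT
      · exact hamax j hj'
      · exact hTmax i hiT j hj'

def TLargest {k : ℕ} (x : Fin k → ℝ) (I : Finset (Fin k)) (t : ℕ) (T : Finset (Fin k)) : Prop :=
  T ⊆ Iᶜ ∧ T.card = min t Iᶜ.card ∧ ∀ i ∈ T, ∀ j ∈ Iᶜ \ T, |x j| ≤ |x i|

theorem stmt12 {m n : ℕ} (A : Matrix (Fin m) (Fin n) ℝ) (xbar xstar : Fin n → ℝ)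
    (b : Fin m → ℝ) (S : Finset (Fin n)) (s : ℕ) (lam φ : ℝ) (hlam : 0 < lam)
    (hb : b = A.mulVec xbar) (hsupp : ∀ i, xbar i ≠ 0 ↔ i ∈ S) (hcardS : S.card = s)
    (hφ : 0 < φ)
    (hREC : ∀ (x : Fin n → ℝ) (I T : Finset (Fin n)), I.card ≤ s →
      l1 (restr Iᶜ x) ≤ l1 (restr I x) + l2 x → TLargest x I s T →
      φ * l2 (restr (I ∪ T) x) ≤ l2 (A.mulVec x))
    (hlev : (l2 (A.mulVec xstar - b))^2 / 2 + lam * (l1 xstar - l2 xstar) ≤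
            lam * (l1 xbar - l2 xbar)) :
    (1/2) * (l2 (A.mulVec xstar - b))^2 +
      lam * (l1 (restr Sᶜ xstar) - l2 (restr Sᶜ xstar)) ≤
      2 * lam^2 * (Real.sqrt s + 1)^2 / φ^2 := by
  set h : Fin n → ℝ := xstar - xbar with hh
  have hAh : A.mulVec xstar - b = A.mulVec h := by
    rw [hb, hh, Matrix.mulVec_sub]
  set u : ℝ := l2 (A.mulVec xstar - b) with hu
  have hu0 : 0 ≤ u := l2_nonneg _
  -- xbar vanishes off S
  have hbar0 : ∀ i, i ∉ S → xbar i = 0 := fun i hi => by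
    by_contra hne; exact hi ((hsupp i).mp hne)
  have hxc : restr Sᶜ xstar = restr Sᶜ h := by
    funext i
    simp only [restr, hh, Pi.sub_apply]
    split
    · next hi => rw [hbar0 i (Finset.mem_compl.mp hi), sub_zero]
    · rfl
  have hbarS : restr S xbar = xbar := by
    funext i
    simp only [restr]
    split
    · rfl
    · next hi => exact (hbar0 i hi).symm
  -- triangle bounds
  have e1 : l1 xbar ≤ l1 (restr S xstar) + l1 (restr S h) := by
    have hre : restr S xstar - restr S h = xbar := by
      funext i
      by_cases hi : i ∈ S
      · simp [restr, hi, hh]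
      · simp [restr, hi, hbar0 i hi]
    calc l1 xbar = l1 (restr S xstar - restr S h) := by rw [hre]
      _ ≤ l1 (restr S xstar) + l1 (restr S h) := l1_sub_le _ _
  have e2 : l2 xstar ≤ l2 xbar + l2 h := by
    have := l2_sub_le xstar xbar; rwa [← hh] at this
  have e3 : l1 xstar = l1 (restr S xstar) + l1 (restr Sᶜ xstar) := l1_split S xstar
  -- key inequality
  have key1 : u^2/2 + lam * l1 (restr Sᶜ xstar) ≤ lam * (l1 (restr S h) + l2 h) := by
    have f1 := mul_le_mul_of_nonneg_left e1 hlam.le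
    have f2 := mul_le_mul_of_nonneg_left e2 hlam.le
    have f3 : lam * l1 xstar = lam * l1 (restr S xstar) + lam * l1 (restr Sᶜ xstar) := by
      rw [e3]; ring
    have g1 : lam * (l1 (restr S xstar) + l1 (restr S h)) = lam * l1 (restr S xstar) + lam * l1 (restr S h) := by ring
    have g2 : lam * (l2 xbar + l2 h) = lam * l2 xbar + lam * l2 h := by ring
    have g3 : lam * (l1 xstar - l2 xstar) = lam * l1 xstar - lam * l2 xstar := by ring
    have g4 : lam * (l1 xbar - l2 xbar) = lam * l1 xbar - lam * l2 xbar := by ring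
    have g5 : lam * (l1 (restr S h) + l2 h) = lam * l1 (restr S h) + lam * l2 h := by ring
    linarith
  -- cone condition
  have cone : l1 (restr Sᶜ h) ≤ l1 (restr S h) + l2 h := by
    have h1 : lam * l1 (restr Sᶜ h) ≤ lam * (l1 (restr S h) + l2 h) := by
      rw [← hxc]
      have g5 : lam * (l1 (restr S h) + l2 h) = lam * l1 (restr S h) + lam * l2 h := by ring
      nlinarith [key1, sq_nonneg u]
    exact le_of_mul_le_mul_left h1 hlam
  -- construct T
  obtain ⟨T, hTsub, hTcard, hTmax⟩ :=
    exists_top (fun i => |h i|) Sᶜ (min s Sᶜ.card) (min_le_right _ _)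
  have hrec : φ * l2 (restr (S ∪ T) h) ≤ l2 (A.mulVec h) :=
    hREC h S T (le_of_eq hcardS) cone ⟨hTsub, hTcard, hTmax⟩
  rw [← hAh, ← hu] at hrec
  set w : ℝ := l2 (restr (S ∪ T) h) with hw
  have hw0 : 0 ≤ w := l2_nonneg _
  -- chain of bounds
  have c0 : l2 (restr S h) ≤ w := l2_restr_mono Finset.subset_union_left h
  have c1 : l1 (restr S h) ≤ Real.sqrt s * l2 (restr S h) := by
    have := l1_le_sqrt_card_mul_l2 S h; rwa [hcardS] at this
  have c2 : l2 h ≤ l2 (restr S h) + l2 (restr Sᶜ h) := l2_split_le S h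
  set L : ℝ := lam * (Real.sqrt s + 1) with hL
  have hL0 : 0 < L := by
    apply mul_pos hlam; positivity
  have hP : 0 ≤ lam * (l1 (restr Sᶜ xstar) - l2 (restr Sᶜ xstar)) := by
    apply mul_nonneg hlam.le
    have := l2_le_l1 (restr Sᶜ xstar); linarith
  -- main bound : u^2/2 + P ≤ L * w
  have main : u^2/2 + lam * (l1 (restr Sᶜ xstar) - l2 (restr Sᶜ xstar)) ≤ L * w := by
    have hsqrt0 : 0 ≤ Real.sqrt s := Real.sqrt_nonneg _
    have hb1 : l1 (restr S h) + l2 h - l2 (restr Sᶜ h) ≤ (Real.sqrt s + 1) * w := by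
      nlinarith
    have hb2 : lam * (l1 (restr S h) + l2 h - l2 (restr Sᶜ h)) ≤ L * w := by
      rw [hL, mul_assoc]
      exact mul_le_mul_of_nonneg_left hb1 hlam.le
    have hl2c : l2 (restr Sᶜ xstar) = l2 (restr Sᶜ h) := by rw [hxc]
    nlinarith [key1]
  have hq : φ^2 * (u^2/2 + lam * (l1 (restr Sᶜ xstar) - l2 (restr Sᶜ xstar))) ≤ L * (φ * u) := by
    calc φ^2 * (u^2/2 + lam * (l1 (restr Sᶜ xstar) - l2 (restr Sᶜ xstar)))
        ≤ φ^2 * (L * w) := mul_le_mul_of_nonneg_left main (sq_nonneg φ)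
      _ = (L * φ) * (φ * w) := by ring
      _ ≤ (L * φ) * u := mul_le_mul_of_nonneg_left hrec (mul_nonneg hL0.le hφ.le)
      _ = L * (φ * u) := by ring
  have claim : φ * u ≤ 2 * L := by
    nlinarith [hq, mul_nonneg (sq_nonneg φ) hP, mul_nonneg hφ.le hu0, hL0]
  rw [le_div_iff₀ (by positivity : (0:ℝ) < φ^2)]
  have h2 : L * (φ * u) ≤ L * (2 * L) := mul_le_mul_of_nonneg_left claim hL0.le
  have hLsq : L * (2 * L) = 2 * lam^2 * (Real.sqrt s + 1)^2 := by rw [hL]; ring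
  linarith
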